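/- Let a be a real number and define c_k = a^k · (2(k−1))! / (k−1)! for each integer k ≥ 1. Then for every integer k ≥ 2 one has c_k = Σ_{j=1}^{k−1} C(k, j) · c_j · c_{k−j}, where C(k, j) denotes the binomial coefficient. -/
import Mathlib

lemma fact_key (m : ℕ) : (2 * m).factorial = catalan m * m.factorial * (m + 1).factorial := by
  have h := succ_mul_catalan_eq_centralBinom m
  have h2 : (2 * m).choose m * m.factorial * (2 * m - m).factorial = (2 * m).factorial :=
    Nat.choose_mul_factorial_mul_factorial (by omega)
  have hm : 2 * m - m = m := by omega
  rw [hm] at h2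
  have hcb : (2 * m).choose m = (m + 1) * catalan m := by
    rw [h]; rfl
  rw [← h2, hcb, Nat.factorial_succ]
  ring

lemma fact_key_real (m : ℕ) :
    ((2 * m).factorial : ℝ) / (m.factorial : ℝ) = (catalan m : ℝ) * ((m + 1).factorial : ℝ) := by
  rw [div_eq_iff (by exact_mod_cast m.factorial_ne_zero)]
  rw [fact_key m]
  push_cast
  ring

/-- Remark 3.4 / Lemma 3.1 of Serlet: the numbers `c_k = a^k (2(k−1))!/(k−1)!` satisfy the
recurrence `c_k = Σ_{j=1}^{k−1} C(k,j) c_j c_{k−j}` for all `k ≥ 2`. -/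
theorem c_recurrence (a : ℝ) (c : ℕ → ℝ)
    (hc : ∀ k : ℕ, 1 ≤ k →
      c k = a ^ k * ((2 * (k - 1)).factorial : ℝ) / ((k - 1).factorial : ℝ))
    (k : ℕ) (hk : 2 ≤ k) :
    c k = ∑ j ∈ Finset.Ico 1 k, (k.choose j : ℝ) * c j * c (k - j) := by
  obtain ⟨n, rfl⟩ : ∃ n, k = n + 2 := ⟨k - 2, by omega⟩
  rw [hc _ (by omega)]
  have hsum : ∀ j ∈ Finset.Ico 1 (n + 2),
      ((n + 2).choose j : ℝ) * c j * c (n + 2 - j)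
        = a ^ (n + 2) * ((n + 2).factorial : ℝ) * (catalan (j - 1) : ℝ)
            * (catalan (n + 1 - j) : ℝ) := by
    intro j hj
    simp only [Finset.mem_Ico] at hj
    obtain ⟨i, rfl⟩ : ∃ i, j = i + 1 := ⟨j - 1, by omega⟩
    have hi : i ≤ n := by omega
    rw [hc _ (by omega), hc _ (by omega)]
    have e1 : i + 1 - 1 = i := by omega
    have e2 : n + 2 - (i + 1) = n + 1 - i := by omega
    have e3 : n + 1 - i - 1 = n - i := by omega
    rw [e1, e2, e3]
    have d1 : a ^ (i + 1) * ((2 * i).factorial : ℝ) / (i.factorial : ℝ)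
        = a ^ (i + 1) * ((catalan i : ℝ) * ((i + 1).factorial : ℝ)) := by
      rw [mul_div_assoc, fact_key_real]
    have d2 : a ^ (n + 1 - i) * ((2 * (n - i)).factorial : ℝ) / ((n - i).factorial : ℝ)
        = a ^ (n + 1 - i) * ((catalan (n - i) : ℝ) * ((n - i + 1).factorial : ℝ)) := by
      rw [mul_div_assoc, fact_key_real]
    rw [d1, d2]
    have hch : ((n + 2).choose (i + 1) : ℝ) * ((i + 1).factorial : ℝ)
        * ((n - i + 1).factorial : ℝ) = ((n + 2).factorial : ℝ) := by
      have := Nat.choose_mul_factorial_mul_factorial (show i + 1 ≤ n + 2 by omega)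
      have e4 : n + 2 - (i + 1) = n - i + 1 := by omega
      rw [e4] at this
      exact_mod_cast this
    have hpow : a ^ (i + 1) * a ^ (n + 1 - i) = a ^ (n + 2) := by
      rw [← pow_add]; congr 1; omega
    rw [show n + 1 - (i + 1) = n - i from by omega, ← hch, ← hpow]
    ring
  rw [Finset.sum_congr rfl hsum]
  have e5 : n + 2 - 1 = n + 1 := by omega
  rw [e5, mul_div_assoc, fact_key_real]
  rw [Finset.sum_Ico_eq_sum_range]
  have e6 : n + 2 - 1 = n + 1 := rfl
  rw [e6]
  have hcat : (catalan (n + 1) : ℝ) = ∑ i ∈ Finset.range (n + 1),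
      (catalan i : ℝ) * (catalan (n - i) : ℝ) := by
    have : catalan (n + 1) = ∑ i ∈ Finset.range (n + 1), catalan i * catalan (n - i) := by
      rw [catalan_succ]
      exact Fin.sum_univ_eq_sum_range (fun i => catalan i * catalan (n - i)) (n + 1)
    rw [this]; push_cast; rfl
  calc a ^ (n + 2) * ((catalan (n + 1) : ℝ) * ((n + 1 + 1).factorial : ℝ))
      = ∑ i ∈ Finset.range (n + 1), a ^ (n + 2) * ((n + 2).factorial : ℝ)
          * (catalan i : ℝ) * (catalan (n - i) : ℝ) := by
        rw [hcat, Finset.sum_mul, Finset.mul_sum]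
        apply Finset.sum_congr rfl
        intro i _
        ring
    _ = _ := by
        apply Finset.sum_congr rfl
        intro i hi
        simp only [Finset.mem_range] at hi
        rw [show 1 + i - 1 = i from by omega, show n + 1 - (1 + i) = n - i from by omega]
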